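/- For k = 2 and the marking assumption (p_0 = 0, p_2 = 1), the value min_{p_1 ∈ [0,1]} max_{w ∈ [0,1]} Ĉ(w, (0, p_1, 1)) is attained at p_1 = 1/2, and max_w Ĉ(w, (0, 1/2, 1)) = Ĉ(1/2, (0,1/2,1)) = h_2(1/2·1/2 + 1/4) - 1/2·h_2(1/2) = h_2(1/2) - 1/2 = 1/2. Hence C_{2,2} = (1/2)·(1/2) = 1/4. -/

import Mathlib

/-- Binary entropy in bits. -/
noncomputable def h2 (p : ℝ) : ℝ := -(p * Real.logb 2 p) - (1 - p) * Real.logb 2 (1 - p)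

/-- The payoff Ĉ(w,(0,p₁,1)) for k = 2:
α₀(w) = (1-w)², α₁(w) = 2w(1-w), α₂(w) = w². -/
noncomputable def Chat2 (w p1 : ℝ) : ℝ :=
  h2 (2 * w * (1 - w) * p1 + w ^ 2) - 2 * w * (1 - w) * h2 p1

open Real Set

lemma cap_log2_pos : (0:ℝ) < Real.log 2 := Real.log_pos (by norm_num)

lemma h2_eq (p : ℝ) : h2 p = Real.binEntropy p / Real.log 2 := by
  unfold h2 Real.binEntropy Real.logb
  rw [Real.log_inv, Real.log_inv]
  ring

lemma h2_half : h2 (1/2 : ℝ) = 1 := by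
  rw [h2_eq]
  have : (1/2 : ℝ) = 2⁻¹ := by norm_num
  rw [this, Real.binEntropy_two_inv, div_self (ne_of_gt cap_log2_pos)]

noncomputable def capF (w : ℝ) : ℝ := Real.log 2 * (1/2 + 2*w*(1-w)) - Real.binEntropy w
noncomputable def capG (w : ℝ) : ℝ := Real.log w - Real.log (1-w) - 4 * Real.log 2 * (w - 1/2)

lemma capG_hasDeriv {w : ℝ} (h0 : 0 < w) (h1 : w < 1) :
    HasDerivAt capG (1/w + 1/(1-w) - 4 * Real.log 2) w := by
  have h1' : (0:ℝ) < 1 - w := by linarith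
  have d1 : HasDerivAt (fun w : ℝ => Real.log w) (1/w) w := by
    simpa [one_div] using Real.hasDerivAt_log (ne_of_gt h0)
  have d2 : HasDerivAt (fun w : ℝ => Real.log (1 - w)) (-(1/(1-w))) w := by
    have := (Real.hasDerivAt_log (ne_of_gt h1')).comp w
      (((hasDerivAt_id w).const_sub 1))
    simpa [one_div, Function.comp_def] using this
  have d3 : HasDerivAt (fun w : ℝ => 4 * Real.log 2 * (w - 1/2)) (4 * Real.log 2) w := by
    have := ((hasDerivAt_id w).sub_const (1/2)).const_mul (4 * Real.log 2)
    simp only [id, mul_one] at this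
    exact this
  have := (d1.sub d2).sub d3
  exact this.congr_deriv (by ring)

lemma capG_strictMono : StrictMonoOn capG (Ioo (0:ℝ) 1) := by
  apply strictMonoOn_of_deriv_pos (convex_Ioo 0 1)
  · intro x hx
    exact ((capG_hasDeriv hx.1 hx.2).continuousAt).continuousWithinAt
  · intro x hx
    rw [interior_Ioo] at hx
    rw [(capG_hasDeriv hx.1 hx.2).deriv]
    have hx1 : (0:ℝ) < 1 - x := by linarith [hx.2]
    have key : 4 ≤ 1/x + 1/(1-x) := by
      rw [div_add_div _ _ (ne_of_gt hx.1) (ne_of_gt hx1), le_div_iff₀ (mul_pos hx.1 hx1)]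
      nlinarith [sq_nonneg (x - 1/2)]
    have : Real.log 2 < 1 := by
      have := Real.log_lt_sub_one_of_pos (x := 2) (by norm_num) (by norm_num)
      linarith
    linarith

lemma capG_half : capG (1/2) = 0 := by norm_num [capG]

lemma capF_hasDeriv {w : ℝ} (h0 : 0 < w) (h1 : w < 1) : HasDerivAt capF (capG w) w := by
  have hb : HasDerivAt Real.binEntropy (Real.log (1-w) - Real.log w) w :=
    Real.hasDerivAt_binEntropy (ne_of_gt h0) (ne_of_lt h1)
  have hq : HasDerivAt (fun w : ℝ => Real.log 2 * (1/2 + 2*w*(1-w)))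
      (Real.log 2 * (2*(1-w) + -(2*w))) w := by
    have h := ((hasDerivAt_id w).const_mul (2:ℝ)).mul ((hasDerivAt_id w).const_sub 1)
    have h2 : HasDerivAt (fun w : ℝ => 2*w*(1-w)) (2 * (1 - w) + -(2 * w)) w := by
      simpa [Pi.mul_def] using h
    have h3 : HasDerivAt (fun w : ℝ => 1/2 + 2*w*(1-w)) (2 * (1 - w) + -(2 * w)) w := by
      simpa using h2.const_add (1/2 : ℝ)
    exact h3.const_mul (Real.log 2)
  have := hq.sub hb
  exact this.congr_deriv (by unfold capG; ring)

lemma capF_half : capF (1/2) = 0 := by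
  have : (1/2 : ℝ) = 2⁻¹ := by norm_num
  unfold capF
  rw [this, Real.binEntropy_two_inv]
  ring

lemma capF_nonneg {w : ℝ} (h0 : 0 ≤ w) (h1 : w ≤ 1) : 0 ≤ capF w := by
  have hcont : Continuous capF := by
    unfold capF
    fun_prop
  rcases le_or_gt w (1/2) with hw | hw
  · rcases eq_or_lt_of_le h0 with rfl | h0'
    · have : capF 0 = Real.log 2 * (1/2) := by simp [capF]
      rw [this]; positivity
    · have anti : AntitoneOn capF (Icc w (1/2)) := by
        apply antitoneOn_of_deriv_nonpos (convex_Icc _ _) hcont.continuousOn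
        · intro x hx
          rw [interior_Icc] at hx
          exact (capF_hasDeriv (lt_trans h0' hx.1)
            (by linarith [hx.2])).differentiableAt.differentiableWithinAt
        · intro x hx
          rw [interior_Icc] at hx
          rw [(capF_hasDeriv (lt_trans h0' hx.1) (by linarith [hx.2])).deriv]
          have := capG_strictMono ⟨lt_trans h0' hx.1, by linarith [hx.2]⟩
            (by norm_num : (1/2:ℝ) ∈ Ioo (0:ℝ) 1) hx.2
          rw [capG_half] at this
          linarith
      have := anti (left_mem_Icc.mpr hw) (right_mem_Icc.mpr hw) hw
      rw [capF_half] at this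
      linarith
  · rcases eq_or_lt_of_le h1 with rfl | h1'
    · have : capF 1 = Real.log 2 * (1/2) := by simp [capF]
      rw [this]; positivity
    · have mono : MonotoneOn capF (Icc (1/2) w) := by
        apply monotoneOn_of_deriv_nonneg (convex_Icc _ _) hcont.continuousOn
        · intro x hx
          rw [interior_Icc] at hx
          exact (capF_hasDeriv (by linarith [hx.1])
            (lt_of_le_of_lt hx.2.le h1')).differentiableAt.differentiableWithinAt
        · intro x hx
          rw [interior_Icc] at hx
          rw [(capF_hasDeriv (by linarith [hx.1]) (lt_trans hx.2 h1')).deriv]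
          have := capG_strictMono (by norm_num : (1/2:ℝ) ∈ Ioo (0:ℝ) 1)
            ⟨by linarith [hx.1], lt_trans hx.2 h1'⟩ hx.1
          rw [capG_half] at this
          linarith
      have := mono (left_mem_Icc.mpr hw.le) (right_mem_Icc.mpr hw.le) hw.le
      rw [capF_half] at this
      linarith

/-- quadratic upper bound on h2 -/
lemma h2_le_quad {w : ℝ} (h0 : 0 ≤ w) (h1 : w ≤ 1) : h2 w ≤ 1/2 + 2*w*(1-w) := by
  have hF := capF_nonneg h0 h1
  unfold capF at hF
  rw [h2_eq, div_le_iff₀ cap_log2_pos]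
  linarith

lemma chat2_at_half (w : ℝ) : Chat2 w (1/2) = h2 w - 2*w*(1-w) := by
  unfold Chat2
  rw [show 2 * w * (1 - w) * (1/2) + w ^ 2 = w by ring, h2_half]
  ring

theorem capacity_k2 :
    -- the inner max for p₁ = 1/2 equals 1/2 and is attained at w = 1/2
    (IsGreatest {v : ℝ | ∃ w ∈ Set.Icc (0 : ℝ) 1, v = Chat2 w (1/2)} (1/2) ∧
      Chat2 (1/2) (1/2) = 1/2) ∧
    -- p₁ = 1/2 is a minimizer: any other p₁ gives inner max at least 1/2
    (∀ p1 ∈ Set.Icc (0 : ℝ) 1, ∃ w ∈ Set.Icc (0 : ℝ) 1, 1/2 ≤ Chat2 w p1) ∧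
    -- hence C_{2,2} = (1/2) · (1/2) = 1/4
    (1 / 2 : ℝ) * (1 / 2) = 1 / 4 := by
  have hval : Chat2 (1/2) (1/2) = 1/2 := by
    rw [chat2_at_half, h2_half]; norm_num
  refine ⟨⟨⟨⟨1/2, by norm_num, hval.symm⟩, ?_⟩, hval⟩, ?_, by norm_num⟩
  · rintro v ⟨w, hw, rfl⟩
    rw [chat2_at_half]
    have := h2_le_quad hw.1 hw.2
    linarith
  · intro p1 hp
    refine ⟨1/2, by norm_num, ?_⟩
    have hconc := (Real.strictConcave_binEntropy.concaveOn).2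
      (mem_Icc.mpr hp) (by norm_num : (1/2:ℝ) ∈ Icc (0:ℝ) 1)
      (by norm_num : (0:ℝ) ≤ 1/2) (by norm_num : (0:ℝ) ≤ 1/2) (by norm_num)
    simp only [smul_eq_mul] at hconc
    have hb2 : Real.binEntropy (1/2 : ℝ) = Real.log 2 := by
      rw [show (1/2:ℝ) = 2⁻¹ by norm_num, Real.binEntropy_two_inv]
    rw [hb2] at hconc
    have harg : (1/2:ℝ) * p1 + 1/2 * (1/2) = p1/2 + 1/4 := by ring
    rw [harg] at hconc
    have hrw : Chat2 (1/2) p1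
        = (Real.binEntropy (p1/2 + 1/4) - Real.binEntropy p1 / 2) / Real.log 2 := by
      unfold Chat2
      rw [show 2 * (1/2:ℝ) * (1 - 1/2) * p1 + (1/2)^2 = p1/2 + 1/4 by ring,
        h2_eq, h2_eq]
      ring
    rw [hrw, le_div_iff₀ cap_log2_pos]
    linarith
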